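/- Canonical minimal-rank representatives: for any closed term t over Σ₁ ∪ Σ₂ ∪ Σ₃ ∪ {x}, there exists a closed term t′ over the same signature such that (1) rank(t′) ≤ rank(t); (2) t ∼_{Mₙ,x} t′ (t and t′ are provably equal in 𝕋₁ + 𝕋₂ with constants y₁,…,yₙ, x); (3) (t′)^𝒜 = [t′]_≅ and u^𝒜 = [u]_≅ for every alien subterm u of t′ at arbitrary depth; and (4) t′ is not ≅-isomorphic to any term over Σ₁ ∪ Σ₂ ∪ Σ₃ ∪ {x} of strictly smaller rank. -/

import Mathlib

/-- First-order terms over symbols `S` with arity `ar` and variables `V`. -/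
inductive Tm (S : Type) (ar : S → ℕ) (V : Type) : Type
  | var : V → Tm S ar V
  | app : (f : S) → (Fin (ar f) → Tm S ar V) → Tm S ar V

namespace Tm
variable {S : Type} {ar : S → ℕ} {V W : Type}

def mapVar (g : V → W) : Tm S ar V → Tm S ar W
  | var v => var (g v)
  | app f ts => app f (fun i => (ts i).mapVar g)

def bind : Tm S ar V → (V → Tm S ar W) → Tm S ar W
  | var v, g => g v
  | app f ts, g => app f (fun i => (ts i).bind g)

/-- All variables of a term belong to a given set. -/
def VarsIn : Tm S ar V → Set V → Prop
  | var v, A => v ∈ A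
  | app _ ts, A => ∀ i, VarsIn (ts i) A

/-- The term contains at least one variable. -/
def HasVar : Tm S ar V → Prop
  | var _ => True
  | app _ ts => ∃ i, HasVar (ts i)

end Tm

/-- The combined signature: operation symbols of the two theories (`op`),
generator constants `y₁,…,yₙ` (`gen`), and indeterminate constants `x = ind 0`,
`xᵢ = ind i` (`ind`). -/
inductive CSym (F : Bool → Type) (n : ℕ) : Type
  | op : (b : Bool) → F b → CSym F n
  | gen : Fin n → CSym F n
  | ind : ℕ → CSym F n

namespace CSym
variable {F : Bool → Type} {n : ℕ}

def arity (arF : ∀ b, F b → ℕ) : CSym F n → ℕ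
  | op b f => arF b f
  | gen _ => 0
  | ind _ => 0

/-- Which of the four component signatures a symbol belongs to:
`0 = Σ₁`, `1 = Σ₂`, `2 = Σ₃`, `3 = Σ₄`. -/
def sig : CSym F n → Fin 4
  | op false _ => 0
  | op true _ => 1
  | gen _ => 2
  | ind _ => 3

end CSym
section Setup

variable (F : Bool → Type) (arF : ∀ b, F b → ℕ) (n : ℕ)

/-- Closed terms over the combined signature `Σ = Σ₁ ∪ Σ₂ ∪ Σ₃ ∪ Σ₄`. -/
abbrev CT := Tm (CSym F n) (CSym.arity arF) Empty

/-- The root symbol of a closed term. -/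
def rootSym : CT F arF n → CSym F n
  | .var v => v.elim
  | .app f _ => f

/-- All symbols of the closed term satisfy the predicate `P`. -/
def InSig (P : CSym F n → Prop) : CT F arF n → Prop
  | .var v => v.elim
  | .app f ts => P f ∧ ∀ i, InSig P (ts i)

/-- A closed term is pure if all of its symbols belong to a single one of the
four component signatures. -/
def IsPure (t : CT F arF n) : Prop := ∃ k : Fin 4, InSig F arF n (fun s => s.sig = k) t

/-- The rank of a closed term: `0` if pure, and otherwise `1` plus the maximal
rank of its alien subterms. -/
def rank : CT F arF n → ℕ
  | .var v => v.elim
  | .app f ts =>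
      Finset.univ.sup fun i =>
        rank (ts i) + (if (rootSym F arF n (ts i)).sig = f.sig then 0 else 1)

/-- The maximal subterms of `t` whose root is outside signature `k`. -/
def aliensUnder (k : Fin 4) : CT F arF n → Set (CT F arF n)
  | .var v => v.elim
  | .app f ts =>
      if f.sig = k then ⋃ i, aliensUnder k (ts i) else {Tm.app f ts}

/-- The alien subterms of a closed term (relative to the signature of its root). -/
def aliensSet : CT F arF n → Set (CT F arF n)
  | .var v => v.elim
  | .app f ts => ⋃ i, aliensUnder F arF n f.sig (ts i)

/-- All alien subterms at arbitrary depth. -/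
def allAliensSet : CT F arF n → Set (CT F arF n)
  | .var v => v.elim
  | .app f ts =>
      ⋃ i, (if (rootSym F arF n (ts i)).sig = f.sig then (∅ : Set _) else {ts i}) ∪
        allAliensSet (ts i)

/-- View a closed combined term through the layer of theory `b`: keep the
top part built from `Σ_b`-symbols and regard the maximal non-`Σ_b`-rooted
subterms as opaque constants. -/
def layerize (b : Bool) : CT F arF n → Tm (F b) (arF b) (CT F arF n)
  | .app (.op b' f) ts =>
      if h : b' = b then h ▸ (Tm.app f (fun i => layerize b' (ts i)))
      else Tm.var (Tm.app (.op b' f) ts)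
  | t => Tm.var t

end Setup
section Setup2

variable (F : Bool → Type) (arF : ∀ b, F b → ℕ) (n : ℕ)
variable (Ax : ∀ b, Set (Tm (F b) (arF b) ℕ × Tm (F b) (arF b) ℕ))

mutual
/-- The isomorphism relation `≅` on closed combined terms, defined together
with the layer congruences: two terms are isomorphic iff their roots lie in the
same component signature and their alien abstractions are congruent modulo the
corresponding theory (for the constant signatures `Σ₃, Σ₄` this is syntactic
equality). -/
inductive Iso : CT F arF n → CT F arF n → Prop where
  | opEq (b : Bool) (u v : CT F arF n) :
      (∃ g : F b, rootSym F arF n u = .op b g) →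
      (∃ g : F b, rootSym F arF n v = .op b g) →
      LEq b (layerize F arF n b u) (layerize F arF n b v) → Iso u v
  | constEq (t : CT F arF n) :
      ((rootSym F arF n t).sig = 2 ∨ (rootSym F arF n t).sig = 3) → Iso t t

/-- The congruence `≈_b` on `Σ_b`-terms whose constants are closed combined
terms (representing their `≅`-classes): generated by the substitution instances
of the axioms of `𝕋_b` together with the identification of `≅`-related
constants. -/
inductive LEq : (b : Bool) →
    Tm (F b) (arF b) (CT F arF n) → Tm (F b) (arF b) (CT F arF n) → Prop where
  | refl (b) (t) : LEq b t t
  | symm {b s t} : LEq b s t → LEq b t s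
  | trans {b s t u} : LEq b s t → LEq b t u → LEq b s u
  | congr (b) (g : F b) (ts us : Fin (arF b g) → Tm (F b) (arF b) (CT F arF n)) :
      (∀ i, LEq b (ts i) (us i)) → LEq b (.app g ts) (.app g us)
  | varRel (b) (s t : CT F arF n) : Iso s t → LEq b (.var s) (.var t)
  | ax (b) (u v : Tm (F b) (arF b) ℕ) : (u, v) ∈ Ax b →
      ∀ σ : ℕ → Tm (F b) (arF b) (CT F arF n), LEq b (u.bind σ) (v.bind σ)
end

end Setup2
section Setup3

variable (F : Bool → Type) (arF : ∀ b, F b → ℕ) (n : ℕ)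
variable (Ax : ∀ b, Set (Tm (F b) (arF b) ℕ × Tm (F b) (arF b) ℕ))

/-- The combined algebra `𝒜 = Term^c(Σ)/≅`. -/
abbrev Alg := Quot (Iso F arF n Ax)

/-- Provable equality in the theory `𝕋_b` on terms with variables (equivalently
the smallest `Σ_b`-congruence containing all substitution instances of the
axioms of `𝕋_b`); with `V := Alg` this is the congruence `≈_b` on
`Term^c(Σ_b, Term^c(Σ)/≅)`. -/
inductive AxCong (b : Bool) {V : Type} : Tm (F b) (arF b) V → Tm (F b) (arF b) V → Prop where
  | refl (t) : AxCong b t t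
  | symm {s t} : AxCong b s t → AxCong b t s
  | trans {s t u} : AxCong b s t → AxCong b t u → AxCong b s u
  | congr (g : F b) (ts us : Fin (arF b g) → Tm (F b) (arF b) V) :
      (∀ i, AxCong b (ts i) (us i)) → AxCong b (.app g ts) (.app g us)
  | ax (u v : Tm (F b) (arF b) ℕ) : (u, v) ∈ Ax b →
      ∀ σ : ℕ → Tm (F b) (arF b) V, AxCong b (u.bind σ) (v.bind σ)

/-- Abstraction of alien subterms: `[t]ᵇ_≅ ∈ Term^c(Σ_b, Term^c(Σ)/≅)`. -/
def absQ (b : Bool) (t : CT F arF n) : Tm (F b) (arF b) (Alg F arF n Ax) :=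
  (layerize F arF n b t).mapVar (Quot.mk _)

attribute [local instance] Classical.propDecidable

/-- The interpretation `t^𝒜` of a closed combined term in the combined algebra:
a term collapses to (the class of) an alien subterm whose class its alien
abstraction is `≈_b`-congruent to, and is interpreted by its own class
otherwise. -/
noncomputable def interp : CT F arF n → Alg F arF n Ax
  | .app (.op b g) ts =>
      let t' : CT F arF n := .app (.op b g) (fun i => (interp (ts i)).out)
      if h : ∃ u, u ∈ aliensSet F arF n t' ∧
          AxCong F arF Ax b (absQ F arF n Ax b t') (.var (Quot.mk _ u))
      then Quot.mk _ h.choose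
      else Quot.mk _ t'
  | t => Quot.mk _ t

end Setup3
section Setup4

variable (F : Bool → Type) (arF : ∀ b, F b → ℕ) (n : ℕ)
variable (Ax : ∀ b, Set (Tm (F b) (arF b) ℕ × Tm (F b) (arF b) ℕ))

/-- Substitution of a closed term `w` for the indeterminate constant `x_j` in a
closed combined term. -/
def substInd (j : ℕ) (w : CT F arF n) : CT F arF n → CT F arF n
  | .var v => v.elim
  | .app (.ind j') ts => if j' = j then w else .app (.ind j') ts
  | .app f ts => .app f (fun i => substInd j w (ts i))

/-- The indeterminate constant `x_i` as a closed term (`x = xTm 0`). -/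
def xTm (i : ℕ) : CT F arF n := .app (.ind i) Fin.elim0

/-- Replace every indeterminate constant occurring in a term by `x`. -/
def indToX : CT F arF n → CT F arF n
  | .var v => v.elim
  | .app (.ind _) _ => xTm F arF n 0
  | .app f ts => .app f (fun i => indToX (ts i))

/-- Embedding of `Σ_b`-terms into combined terms. -/
def embedOp (b : Bool) {V : Type} : Tm (F b) (arF b) V → Tm (CSym F n) (CSym.arity arF) V
  | .var v => .var v
  | .app g ts => .app (.op b g) (fun i => embedOp b (ts i))

/-- Provable equality for the (combination of the) theories `𝕋_b` (`b ∈ B`) on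
closed terms over the sub-signature of symbols satisfying `P`: the smallest
congruence on that set of closed terms containing all substitution instances
(by closed terms over the sub-signature) of the axioms. -/
inductive PE (B : Set Bool) (P : CSym F n → Prop) : CT F arF n → CT F arF n → Prop where
  | refl (t) : InSig F arF n P t → PE B P t t
  | symm {s t} : PE B P s t → PE B P t s
  | trans {s t u} : PE B P s t → PE B P t u → PE B P s u
  | congr (f : CSym F n) (ts us : Fin (CSym.arity arF f) → CT F arF n) : P f →
      (∀ i, PE B P (ts i) (us i)) → PE B P (.app f ts) (.app f us)
  | ax (b : Bool) (hb : b ∈ B) (u v : Tm (F b) (arF b) ℕ) (h : (u, v) ∈ Ax b)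
      (σ : ℕ → CT F arF n) : (∀ m, InSig F arF n P (σ m)) →
      PE B P ((embedOp F arF n b u).bind σ) ((embedOp F arF n b v).bind σ)

/-- The sub-signature consisting of the operations of the theories in `B`, all
generator constants `y₁,…,yₙ`, and the indeterminates `x_j` with `j ∈ J`. -/
def SigP (B : Set Bool) (J : Set ℕ) : CSym F n → Prop
  | .op b _ => b ∈ B
  | .gen _ => True
  | .ind j => j ∈ J

/-- The (combination of the) theories in `B` is non-trivial: it does not prove
the equation `x = y` for distinct variables (equivalently, it does not identify
two distinct indeterminate constants). -/
def Nontriv (B : Set Bool) : Prop :=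
  ¬ PE F arF n Ax B (SigP F n B Set.univ) (xTm F arF n 1) (xTm F arF n 2)

/-- Membership of (the class of) `t` in the logical isotropy group of the free
model on `n` generators of the combination of the theories in `B`: `t` is a
closed term over the signature extended by the constant `x` that is invertible
under substitution into `x` and commutes generically with every operation. -/
def GIso (B : Set Bool) (t : CT F arF n) : Prop :=
  InSig F arF n (SigP F n B {0}) t ∧
  (∃ tinv, InSig F arF n (SigP F n B {0}) tinv ∧
    PE F arF n Ax B (SigP F n B {0}) (substInd F arF n 0 tinv t) (xTm F arF n 0) ∧
    PE F arF n Ax B (SigP F n B {0}) (substInd F arF n 0 t tinv) (xTm F arF n 0)) ∧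
  ∀ b, b ∈ B → ∀ g : F b,
    PE F arF n Ax B (SigP F n B {j | 1 ≤ j ∧ j ≤ arF b g})
      (substInd F arF n 0 (.app (.op b g) (fun i => xTm F arF n (i.val + 1))) t)
      (.app (.op b g) (fun i => substInd F arF n 0 (xTm F arF n (i.val + 1)) t))

/-- `g` is a projection in `𝕋_b`. -/
def IsProj (b : Bool) (g : F b) : Prop :=
  ∃ i : Fin (arF b g),
    AxCong F arF Ax b (V := ℕ) (.app g (fun j => .var j.val)) (.var i.val)

/-- `g` is constant in `𝕋_b`: `𝕋_b` proves `g(y₁,…,y_m) = s` for pairwise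
distinct variables none of which occurs in `s`. -/
def IsConst (b : Bool) (g : F b) : Prop :=
  ∃ s : Tm (F b) (arF b) ℕ, s.VarsIn {m | arF b g ≤ m} ∧
    AxCong F arF Ax b (V := ℕ) (.app g (fun j => .var j.val)) s

end Setup4
section Models

variable (F : Bool → Type) (arF : ∀ b, F b → ℕ) (n : ℕ)
variable (Ax : ∀ b, Set (Tm (F b) (arF b) ℕ × Tm (F b) (arF b) ℕ))

/-- Evaluation of a `Σ_b`-term in a set equipped with operations. -/
def evalTm {α : Type} (ops : ∀ b (g : F b), (Fin (arF b g) → α) → α)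
    (b : Bool) {V : Type} (ρ : V → α) : Tm (F b) (arF b) V → α
  | .var v => ρ v
  | .app g ts => ops b g (fun i => evalTm ops b ρ (ts i))

/-- A (set-based) model of the combined theory `𝕋₁ + 𝕋₂`. -/
structure TModel where
  carrier : Type
  ops : ∀ b (g : F b), (Fin (arF b g) → carrier) → carrier
  sat : ∀ b u v, (u, v) ∈ Ax b → ∀ ρ : ℕ → carrier,
      evalTm F arF ops b ρ u = evalTm F arF ops b ρ v

/-- Homomorphisms of models. -/
@[ext]
structure TModelHom (M N : TModel F arF Ax) where
  toFun : M.carrier → N.carrier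
  map_ops : ∀ b (g : F b) (args : Fin (arF b g) → M.carrier),
      toFun (M.ops b g args) = N.ops b g (fun i => toFun (args i))

/-- The identity homomorphism. -/
def TModelHom.id (M : TModel F arF Ax) : TModelHom F arF Ax M M :=
  ⟨fun a => a, fun _ _ _ => rfl⟩

/-- Composition of homomorphisms. -/
def TModelHom.comp {M M' M'' : TModel F arF Ax} (h' : TModelHom F arF Ax M' M'')
    (h : TModelHom F arF Ax M M') : TModelHom F arF Ax M M'' :=
  ⟨fun a => h'.toFun (h.toFun a), fun b g args => by
    simp [h.map_ops, h'.map_ops]⟩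

/-- `M` together with the `n` elements `gens` is a free model on `n`
generators: the universal property. -/
def IsFreeOn (M : TModel F arF Ax) (gens : Fin n → M.carrier) : Prop :=
  ∀ (N : TModel F arF Ax) (a : Fin n → N.carrier),
    ∃! h : TModelHom F arF Ax M N, ∀ i, h.toFun (gens i) = a i

end Models

section AuxLemmas
universe u
variable {S : Type} {ar : S → ℕ} {V W X : Type}

theorem Tm.bind_assoc : ∀ (t : Tm S ar V) (σ : V → Tm S ar W) (τ : W → Tm S ar X),
    (t.bind σ).bind τ = t.bind (fun v => (σ v).bind τ)
  | .var v, σ, τ => rfl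
  | .app f ts, σ, τ => by
      simp only [Tm.bind]
      exact congrArg _ (funext fun i => Tm.bind_assoc (ts i) σ τ)

theorem Tm.mapVar_bind : ∀ (t : Tm S ar V) (g : V → W) (σ : W → Tm S ar X),
    (t.mapVar g).bind σ = t.bind (fun v => σ (g v))
  | .var v, g, σ => rfl
  | .app f ts, g, σ => by
      simp only [Tm.bind, Tm.mapVar]
      exact congrArg _ (funext fun i => Tm.mapVar_bind (ts i) g σ)

theorem Tm.bind_mapVar : ∀ (t : Tm S ar V) (σ : V → Tm S ar W) (g : W → X),
    (t.bind σ).mapVar g = t.bind (fun v => (σ v).mapVar g)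
  | .var v, σ, g => rfl
  | .app f ts, σ, g => by
      simp only [Tm.bind, Tm.mapVar]
      exact congrArg _ (funext fun i => Tm.bind_mapVar (ts i) σ g)

variable {F : Bool → Type} {arF : ∀ b, F b → ℕ} {n : ℕ}

theorem embedOp_bind {b : Bool} : ∀ (t : Tm (F b) (arF b) V) (σ : V → Tm (F b) (arF b) W),
    embedOp F arF n b (t.bind σ) = (embedOp F arF n b t).bind (fun v => embedOp F arF n b (σ v))
  | .var v, σ => rfl
  | .app f ts, σ => by
      simp only [Tm.bind, embedOp]
      exact congrArg _ (funext fun i => embedOp_bind (ts i) σ)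

theorem embedOp_mapVar {b : Bool} : ∀ (t : Tm (F b) (arF b) V) (g : V → W),
    embedOp F arF n b (t.mapVar g) = (embedOp F arF n b t).mapVar g
  | .var v, g => rfl
  | .app f ts, g => by
      simp only [Tm.mapVar, embedOp]
      exact congrArg _ (funext fun i => embedOp_mapVar (ts i) g)

theorem interp_gen (Ax : ∀ b, Set (Tm (F b) (arF b) ℕ × Tm (F b) (arF b) ℕ))
    (i : Fin n) (ts : Fin (CSym.arity arF (.gen i)) → CT F arF n) :
    interp F arF n Ax (.app (.gen i) ts) = Quot.mk _ (.app (.gen i) ts) := by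
  rw [interp]
  intro b' f ts1 h
  injection h with h1 h2
  cases h1

theorem interp_ind (Ax : ∀ b, Set (Tm (F b) (arF b) ℕ × Tm (F b) (arF b) ℕ))
    (j : ℕ) (ts : Fin (CSym.arity arF (.ind j)) → CT F arF n) :
    interp F arF n Ax (.app (.ind j) ts) = Quot.mk _ (.app (.ind j) ts) := by
  rw [interp]
  intro b' f ts1 h
  injection h with h1 h2
  cases h1

theorem rank_app (f : CSym F n) (ts : Fin (CSym.arity arF f) → CT F arF n) :
    rank F arF n (.app f ts) = Finset.univ.sup fun i =>
      rank F arF n (ts i) + (if (rootSym F arF n (ts i)).sig = f.sig then 0 else 1) := by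
  rw [rank]

end AuxLemmas

section AuxLemmas2
variable {F : Bool → Type} {arF : ∀ b, F b → ℕ} {n : ℕ}

theorem rootSym_app (f : CSym F n) (ts) : rootSym F arF n (.app f ts) = f := rfl

/-- The `Fin 4` signature index of theory `b`. -/
def sigOf (b : Bool) : Fin 4 := bif b then 1 else 0

theorem sig_op (b : Bool) (g : F b) : (CSym.op (F := F) (n := n) b g).sig = sigOf b := by
  cases b <;> rfl

theorem sig_op_iff (b' b : Bool) (g : F b') :
    (CSym.op (F := F) (n := n) b' g).sig = sigOf b ↔ b' = b := by
  cases b <;> cases b' <;> rw [sig_op] <;> simp [sigOf] <;> decide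

theorem sig_gen (i : Fin n) : (CSym.gen (F := F) i).sig = 2 := rfl
theorem sig_ind (j : ℕ) : (CSym.ind (F := F) (n := n) j).sig = 3 := rfl

theorem sig_gen_ne (i : Fin n) (b : Bool) : (CSym.gen (F := F) i).sig ≠ sigOf b := by
  rw [sig_gen]; cases b <;> decide

theorem sig_ind_ne (j : ℕ) (b : Bool) : (CSym.ind (F := F) (n := n) j).sig ≠ sigOf b := by
  rw [sig_ind]; cases b <;> decide

theorem InSig_app {P : CSym F n → Prop} {f ts} :
    InSig F arF n P (.app f ts) ↔ P f ∧ ∀ i, InSig F arF n P (ts i) := Iff.rfl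

-- indToX unfolding
theorem indToX_op (b : Bool) (g : F b) (ts) :
    indToX F arF n (.app (.op b g) ts) = .app (.op b g) (fun i => indToX F arF n (ts i)) := by
  rw [indToX]
  intro j' ts1 h h2
  cases h

theorem indToX_gen (i : Fin n) (ts) :
    indToX F arF n (.app (.gen i) ts) = .app (.gen i) (fun i => indToX F arF n (ts i)) := by
  rw [indToX]
  intro j' ts1 h h2
  cases h

theorem indToX_ind (j : ℕ) (ts) :
    indToX F arF n (.app (.ind j) ts) = xTm F arF n 0 := by
  rw [indToX]

theorem insig_xTm0 : InSig F arF n (SigP F n Set.univ {0}) (xTm F arF n 0) :=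
  ⟨rfl, fun i => i.elim0⟩

theorem insig_indToX : ∀ t : CT F arF n,
    InSig F arF n (SigP F n Set.univ {0}) (indToX F arF n t)
  | .var v => v.elim
  | .app (.op b g) ts => by
      rw [indToX_op]
      exact ⟨trivial, fun i => insig_indToX (ts i)⟩
  | .app (.gen i) ts => by
      rw [indToX_gen]
      exact ⟨trivial, fun i => insig_indToX (ts i)⟩
  | .app (.ind j) ts => by
      rw [indToX_ind]; exact insig_xTm0

theorem indToX_eq_self : ∀ t : CT F arF n,
    InSig F arF n (SigP F n Set.univ {0}) t → indToX F arF n t = t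
  | .var v, _ => v.elim
  | .app (.op b g) ts, h => by
      rw [indToX_op]
      exact congrArg _ (funext fun i => indToX_eq_self (ts i) (h.2 i))
  | .app (.gen i) ts, h => by
      rw [indToX_gen]
      exact congrArg _ (funext fun i => indToX_eq_self (ts i) (h.2 i))
  | .app (.ind j) ts, h => by
      rw [indToX_ind]
      have hj : j ∈ ({0} : Set ℕ) := h.1
      rcases hj with rfl
      exact congrArg _ (funext fun i => i.elim0)

-- layerize unfolding
theorem layerize_op_same (b : Bool) (g : F b) (ts) :
    layerize F arF n b (.app (.op b g) ts) = .app g (fun i => layerize F arF n b (ts i)) := by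
  rw [layerize, dif_pos rfl]

theorem layerize_op_ne {b' b : Bool} (h : b' ≠ b) (g : F b') (ts) :
    layerize F arF n b (.app (.op b' g) ts) = .var (.app (.op b' g) ts) := by
  rw [layerize, dif_neg h]

theorem layerize_gen (b : Bool) (i : Fin n) (ts) :
    layerize F arF n b (.app (.gen i) ts) = .var (.app (.gen i) ts) := by
  rw [layerize]
  intro b' f ts1 h
  injection h with h1 h2
  cases h1

theorem layerize_ind (b : Bool) (j : ℕ) (ts) :
    layerize F arF n b (.app (.ind j) ts) = .var (.app (.ind j) ts) := by
  rw [layerize]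
  intro b' f ts1 h
  injection h with h1 h2
  cases h1

-- aliens unfolding
theorem aliensUnder_app (k : Fin 4) (f : CSym F n) (ts) :
    aliensUnder F arF n k (.app f ts) =
      if f.sig = k then ⋃ i, aliensUnder F arF n k (ts i) else {Tm.app f ts} := by
  rw [aliensUnder]

theorem aliensSet_app (f : CSym F n) (ts) :
    aliensSet F arF n (.app f ts) = ⋃ i, aliensUnder F arF n f.sig (ts i) := by
  rw [aliensSet]

theorem allAliensSet_app (f : CSym F n) (ts) :
    allAliensSet F arF n (.app f ts) =
      ⋃ i, (if (rootSym F arF n (ts i)).sig = f.sig then (∅ : Set _) else {ts i}) ∪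
        allAliensSet F arF n (ts i) := by
  rw [allAliensSet]

-- VarsIn lemmas
theorem Tm.varsIn_mono {S : Type} {ar : S → ℕ} {V : Type} :
    ∀ {t : Tm S ar V} {A B : Set V}, t.VarsIn A → A ⊆ B → t.VarsIn B
  | .var _, _, _, h, hAB => hAB h
  | .app _ ts, _, _, h, hAB => fun i => Tm.varsIn_mono (h i) hAB

theorem Tm.bind_congr_of_varsIn {S : Type} {ar : S → ℕ} {V W : Type} :
    ∀ {t : Tm S ar V} {A : Set V} {σ τ : V → Tm S ar W}, t.VarsIn A →
      (∀ v ∈ A, σ v = τ v) → t.bind σ = t.bind τ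
  | .var v, _, σ, τ, h, hst => hst v h
  | .app _ ts, _, σ, τ, h, hst => by
      simp only [Tm.bind]
      exact congrArg _ (funext fun i => Tm.bind_congr_of_varsIn (h i) hst)

theorem varsIn_layerize : ∀ (t : CT F arF n) (b : Bool),
    (layerize F arF n b t).VarsIn (aliensUnder F arF n (sigOf b) t)
  | .var v, _ => v.elim
  | .app (.op b' g) ts, b => by
      by_cases hb : b' = b
      · subst hb
        rw [layerize_op_same, aliensUnder_app, if_pos (sig_op b' g)]
        intro i
        exact Tm.varsIn_mono (varsIn_layerize (ts i) b')
          (Set.subset_iUnion (fun i => aliensUnder F arF n (sigOf b') (ts i)) i)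
      · rw [layerize_op_ne hb, aliensUnder_app,
          if_neg (fun h => hb ((sig_op_iff b' b g).mp h))]
        exact rfl
  | .app (.gen i) ts, b => by
      rw [layerize_gen, aliensUnder_app, if_neg (sig_gen_ne i b)]
      exact rfl
  | .app (.ind j) ts, b => by
      rw [layerize_ind, aliensUnder_app, if_neg (sig_ind_ne j b)]
      exact rfl

theorem Tm.varsIn_mapVar {S : Type} {ar : S → ℕ} {V W : Type} {g : V → W} :
    ∀ {t : Tm S ar V} {A : Set V}, t.VarsIn A → (t.mapVar g).VarsIn (g '' A)
  | .var v, _, h => ⟨v, h, rfl⟩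
  | .app _ ts, _, h => fun i => Tm.varsIn_mapVar (h i)

end AuxLemmas2

section AuxLemmas3
variable {F : Bool → Type} {arF : ∀ b, F b → ℕ} {n : ℕ}
variable {Ax : ∀ b, Set (Tm (F b) (arF b) ℕ × Tm (F b) (arF b) ℕ)}

theorem insig_embed_bind {b : Bool} {V : Type} :
    ∀ (q : Tm (F b) (arF b) V) (σ : V → CT F arF n),
      (∀ v, InSig F arF n (SigP F n Set.univ {0}) (σ v)) →
      InSig F arF n (SigP F n Set.univ {0}) ((embedOp F arF n b q).bind σ)
  | .var v, σ, h => h v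
  | .app g qs, σ, h => ⟨trivial, fun i => insig_embed_bind (qs i) σ h⟩

theorem pe_insig {s t : CT F arF n}
    (h : PE F arF n Ax Set.univ (SigP F n Set.univ {0}) s t) :
    InSig F arF n (SigP F n Set.univ {0}) s ∧ InSig F arF n (SigP F n Set.univ {0}) t := by
  induction h with
  | refl t ht => exact ⟨ht, ht⟩
  | symm _ ih => exact ⟨ih.2, ih.1⟩
  | trans _ _ ih1 ih2 => exact ⟨ih1.1, ih2.2⟩
  | congr f ts us hPf _ ih => exact ⟨⟨hPf, fun i => (ih i).1⟩, ⟨hPf, fun i => (ih i).2⟩⟩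
  | ax b hb u v hax σ hσ => exact ⟨insig_embed_bind _ σ hσ, insig_embed_bind _ σ hσ⟩

theorem pe_real_congr {b : Bool} :
    ∀ (q : Tm (F b) (arF b) (CT F arF n)) (σ τ : CT F arF n → CT F arF n),
      (∀ u, PE F arF n Ax Set.univ (SigP F n Set.univ {0}) (σ u) (τ u)) →
      PE F arF n Ax Set.univ (SigP F n Set.univ {0})
        ((embedOp F arF n b q).bind σ) ((embedOp F arF n b q).bind τ)
  | .var u, _, _, h => h u
  | .app g qs, σ, τ, h =>
      PE.congr (.op b g) _ _ (Set.mem_univ b) (fun i => pe_real_congr (qs i) σ τ h)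

theorem axcong_pe {b : Bool} {V : Type} {u v : Tm (F b) (arF b) V}
    (h : AxCong F arF Ax b u v) :
    ∀ σ : V → CT F arF n, (∀ x, InSig F arF n (SigP F n Set.univ {0}) (σ x)) →
      PE F arF n Ax Set.univ (SigP F n Set.univ {0})
        ((embedOp F arF n b u).bind σ) ((embedOp F arF n b v).bind σ) := by
  induction h with
  | refl t => exact fun σ hσ => PE.refl _ (insig_embed_bind t σ hσ)
  | symm _ ih => exact fun σ hσ => (ih σ hσ).symm
  | trans _ _ ih1 ih2 => exact fun σ hσ => (ih1 σ hσ).trans (ih2 σ hσ)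
  | congr g ts us _ ih => exact fun σ hσ => PE.congr (.op b g) _ _ (Set.mem_univ b) (fun i => ih i σ hσ)
  | ax u v hax σ' =>
      intro σ hσ
      simp only [embedOp_bind, Tm.bind_assoc]
      exact PE.ax b (Set.mem_univ b) u v hax _ (fun m => insig_embed_bind (σ' m) σ hσ)

theorem axcong_bind {b : Bool} {V W : Type} {u v : Tm (F b) (arF b) V}
    (h : AxCong F arF Ax b u v) (σ : V → Tm (F b) (arF b) W) :
    AxCong F arF Ax b (u.bind σ) (v.bind σ) := by
  induction h with
  | refl t => exact .refl _
  | symm _ ih => exact ih.symm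
  | trans _ _ ih1 ih2 => exact ih1.trans ih2
  | congr g ts us _ ih => exact .congr g _ _ (fun i => ih i)
  | ax u v hax σ' => simp only [Tm.bind_assoc]; exact .ax u v hax _

theorem leq_axcong {b : Bool} {p q : Tm (F b) (arF b) (CT F arF n)}
    (h : LEq F arF n Ax b p q) :
    AxCong F arF Ax b (p.mapVar (Quot.mk (Iso F arF n Ax)))
      (q.mapVar (Quot.mk (Iso F arF n Ax))) := by
  refine LEq.rec (motive_1 := fun _ _ _ => True)
    (motive_2 := fun b p q _ => AxCong F arF Ax b (p.mapVar (Quot.mk (Iso F arF n Ax)))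
      (q.mapVar (Quot.mk (Iso F arF n Ax))))
    ?_ ?_ ?_ ?_ ?_ ?_ ?_ ?_ h
  · intros; trivial
  · intros; trivial
  · intro b t; exact .refl _
  · intro b s t _ ih; exact ih.symm
  · intro b s t u _ _ ih1 ih2; exact ih1.trans ih2
  · intro b g ts us _ ih; exact .congr g _ _ ih
  · intro b s t hIso _
    show AxCong F arF Ax b (.var (Quot.mk _ s)) (.var (Quot.mk _ t))
    rw [Quot.sound hIso]; exact .refl _
  · intro b u v hax σ
    simp only [Tm.bind_mapVar]
    exact .ax u v hax _

theorem iso_leq_layerize {s u : CT F arF n} (h : Iso F arF n Ax s u) (b : Bool) :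
    LEq F arF n Ax b (layerize F arF n b s) (layerize F arF n b u) := by
  cases h with
  | constEq t _ => exact .refl b _
  | opEq b' s u h1 h2 hL =>
      by_cases hb : b' = b
      · subst hb; exact hL
      · obtain ⟨g1, h1⟩ := h1
        obtain ⟨g2, h2⟩ := h2
        have hIso : Iso F arF n Ax s u := .opEq b' s u ⟨g1, h1⟩ ⟨g2, h2⟩ hL
        cases s with
        | var v => exact v.elim
        | app f ss =>
            cases u with
            | var v => exact v.elim
            | app f' us =>
                have hf : f = .op b' g1 := h1
                have hf' : f' = .op b' g2 := h2
                subst hf hf'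
                rw [layerize_op_ne hb, layerize_op_ne hb]
                exact .varRel b _ _ hIso

theorem quot_eq_leq {s u : CT F arF n}
    (h : Quot.mk (Iso F arF n Ax) s = Quot.mk (Iso F arF n Ax) u) (b : Bool) :
    LEq F arF n Ax b (layerize F arF n b s) (layerize F arF n b u) := by
  have h2 := Quot.eq.mp h
  clear h
  induction h2 with
  | rel _ _ hr => exact iso_leq_layerize hr b
  | refl _ => exact .refl b _
  | symm _ _ _ ih => exact ih.symm
  | trans _ _ _ _ _ ih1 ih2 => exact ih1.trans ih2

theorem quot_eq_axcong {s u : CT F arF n}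
    (h : Quot.mk (Iso F arF n Ax) s = Quot.mk (Iso F arF n Ax) u) (b : Bool) :
    AxCong F arF Ax b (absQ F arF n Ax b s) (absQ F arF n Ax b u) :=
  leq_axcong (quot_eq_leq h b)

theorem real_layerize : ∀ (t : CT F arF n) (b : Bool),
    (embedOp F arF n b (layerize F arF n b t)).bind (indToX F arF n) = indToX F arF n t
  | .var v, _ => v.elim
  | .app (.op b' g) ts, b => by
      by_cases hb : b' = b
      · subst hb
        rw [layerize_op_same, indToX_op]
        simp only [embedOp, Tm.bind]
        exact congrArg _ (funext fun i => real_layerize (ts i) b')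
      · rw [layerize_op_ne hb]; rfl
  | .app (.gen i) ts, b => by rw [layerize_gen]; rfl
  | .app (.ind j) ts, b => by rw [layerize_ind]; rfl

theorem iso_pe {s u : CT F arF n} (h : Iso F arF n Ax s u) :
    PE F arF n Ax Set.univ (SigP F n Set.univ {0})
      (indToX F arF n s) (indToX F arF n u) := by
  refine Iso.rec
    (motive_1 := fun s u _ => PE F arF n Ax Set.univ (SigP F n Set.univ {0})
      (indToX F arF n s) (indToX F arF n u))
    (motive_2 := fun b p q _ => PE F arF n Ax Set.univ (SigP F n Set.univ {0})
      ((embedOp F arF n b p).bind (indToX F arF n))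
      ((embedOp F arF n b q).bind (indToX F arF n)))
    ?_ ?_ ?_ ?_ ?_ ?_ ?_ ?_ h
  · intro b u v _ _ _ ih
    rwa [real_layerize, real_layerize] at ih
  · intro t _; exact PE.refl _ (insig_indToX t)
  · intro b t; exact PE.refl _ (insig_embed_bind t _ (fun v => insig_indToX v))
  · intro b s t _ ih; exact ih.symm
  · intro b s t u _ _ ih1 ih2; exact ih1.trans ih2
  · intro b g ts us _ ih; exact PE.congr (.op b g) _ _ (Set.mem_univ b) ih
  · intro b s t _ ih; exact ih
  · intro b u v hax σ
    simp only [embedOp_bind, Tm.bind_assoc]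
    exact PE.ax b (Set.mem_univ b) u v hax _
      (fun m => insig_embed_bind (σ m) _ (fun v => insig_indToX v))

theorem quot_eq_pe {s u : CT F arF n}
    (h : Quot.mk (Iso F arF n Ax) s = Quot.mk (Iso F arF n Ax) u) :
    PE F arF n Ax Set.univ (SigP F n Set.univ {0})
      (indToX F arF n s) (indToX F arF n u) := by
  have h2 := Quot.eq.mp h
  clear h
  induction h2 with
  | rel _ _ hr => exact iso_pe hr
  | refl x => exact PE.refl _ (insig_indToX x)
  | symm _ _ _ ih => exact ih.symm
  | trans _ _ _ _ _ ih1 ih2 => exact ih1.trans ih2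

end AuxLemmas3

section AuxLemmas4
variable {F : Bool → Type} {arF : ∀ b, F b → ℕ} {n : ℕ}
variable {Ax : ∀ b, Set (Tm (F b) (arF b) ℕ × Tm (F b) (arF b) ℕ)}

theorem Tm.bind_var {S : Type} {ar : S → ℕ} {V : Type} :
    ∀ t : Tm S ar V, t.bind (fun v => .var v) = t
  | .var _ => rfl
  | .app f ts => by
      simp only [Tm.bind]
      exact congrArg _ (funext fun i => Tm.bind_var (ts i))

theorem rootSig_ne_of_mem_aliensUnder : ∀ (s : CT F arF n) (k : Fin 4) (u : CT F arF n),
    u ∈ aliensUnder F arF n k s → (rootSym F arF n u).sig ≠ k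
  | .var v, _, _, h => v.elim
  | .app f ts, k, u, h => by
      rw [aliensUnder_app] at h
      by_cases hf : f.sig = k
      · rw [if_pos hf] at h
        obtain ⟨i, hi⟩ := Set.mem_iUnion.mp h
        exact rootSig_ne_of_mem_aliensUnder (ts i) k u hi
      · rw [if_neg hf] at h
        have : u = Tm.app f ts := h
        rw [this]
        exact hf

theorem rank_aliensUnder : ∀ (s : CT F arF n) (k : Fin 4) (u : CT F arF n),
    u ∈ aliensUnder F arF n k s →
    rank F arF n u + 1 ≤
      rank F arF n s + (if (rootSym F arF n s).sig = k then 0 else 1)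
  | .var v, _, _, h => v.elim
  | .app f ts, k, u, h => by
      rw [aliensUnder_app] at h
      by_cases hf : f.sig = k
      · rw [if_pos hf] at h
        obtain ⟨i, hi⟩ := Set.mem_iUnion.mp h
        have h1 := rank_aliensUnder (ts i) k u hi
        rw [← hf] at h1
        have h2 : rank F arF n (ts i) +
            (if (rootSym F arF n (ts i)).sig = f.sig then 0 else 1) ≤
            rank F arF n (.app f ts) := by
          rw [rank_app]
          apply Finset.le_sup (Finset.mem_univ i)
        rw [rootSym_app, if_pos hf]
        exact le_trans h1 (le_trans h2 (Nat.le_add_right _ 0))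
      · rw [if_neg hf] at h
        have : u = Tm.app f ts := h
        rw [this, rootSym_app, if_neg hf]

theorem insig_aliensUnder {P : CSym F n → Prop} : ∀ (s : CT F arF n) (k : Fin 4) (u : CT F arF n),
    u ∈ aliensUnder F arF n k s → InSig F arF n P s → InSig F arF n P u
  | .var v, _, _, h, _ => v.elim
  | .app f ts, k, u, h, hs => by
      rw [aliensUnder_app] at h
      by_cases hf : f.sig = k
      · rw [if_pos hf] at h
        obtain ⟨i, hi⟩ := Set.mem_iUnion.mp h
        exact insig_aliensUnder (ts i) k u hi (hs.2 i)
      · rw [if_neg hf] at h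
        have : u = Tm.app f ts := h
        rw [this]; exact hs

theorem mem_aliensUnder_cases : ∀ (s : CT F arF n) (k : Fin 4) (u : CT F arF n),
    u ∈ aliensUnder F arF n k s → u = s ∨ u ∈ allAliensSet F arF n s
  | .var v, _, _, h => v.elim
  | .app f ts, k, u, h => by
      rw [aliensUnder_app] at h
      by_cases hf : f.sig = k
      · rw [if_pos hf] at h
        obtain ⟨i, hi⟩ := Set.mem_iUnion.mp h
        right
        rw [allAliensSet_app]
        rcases mem_aliensUnder_cases (ts i) k u hi with he | hmem
        · refine Set.mem_iUnion.mpr ⟨i, Or.inl ?_⟩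
          have hne : (rootSym F arF n (ts i)).sig ≠ f.sig := by
            rw [hf, ← he]
            exact rootSig_ne_of_mem_aliensUnder (ts i) k u hi
          rw [if_neg hne]
          exact he
        · exact Set.mem_iUnion.mpr ⟨i, Or.inr hmem⟩
      · rw [if_neg hf] at h
        exact Or.inl h

theorem allAliens_trans : ∀ (s : CT F arF n) (u : CT F arF n),
    u ∈ allAliensSet F arF n s → allAliensSet F arF n u ⊆ allAliensSet F arF n s
  | .var v, _, h => v.elim
  | .app f ts, u, h => by
      rw [allAliensSet_app] at h ⊢
      obtain ⟨i, hi⟩ := Set.mem_iUnion.mp h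
      rcases hi with h1 | h2
      · by_cases hc : (rootSym F arF n (ts i)).sig = f.sig
        · rw [if_pos hc] at h1
          exact absurd h1 (Set.notMem_empty u)
        · rw [if_neg hc] at h1
          have : u = ts i := h1
          subst this
          intro v hv
          exact Set.mem_iUnion.mpr ⟨i, Or.inr hv⟩
      · intro v hv
        exact Set.mem_iUnion.mpr ⟨i, Or.inr (allAliens_trans (ts i) u h2 hv)⟩

theorem insig_allAliens {P : CSym F n → Prop} : ∀ (s : CT F arF n) (u : CT F arF n),
    u ∈ allAliensSet F arF n s → InSig F arF n P s → InSig F arF n P u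
  | .var v, _, h, _ => v.elim
  | .app f ts, u, h, hs => by
      rw [allAliensSet_app] at h
      obtain ⟨i, hi⟩ := Set.mem_iUnion.mp h
      rcases hi with h1 | h2
      · by_cases hc : (rootSym F arF n (ts i)).sig = f.sig
        · rw [if_pos hc] at h1
          exact absurd h1 (Set.notMem_empty u)
        · rw [if_neg hc] at h1
          have : u = ts i := h1
          rw [this]
          exact hs.2 i
      · exact insig_allAliens (ts i) u h2 (hs.2 i)

theorem iso_rootSig {s u : CT F arF n} (h : Iso F arF n Ax s u) :
    (rootSym F arF n s).sig = (rootSym F arF n u).sig := by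
  cases h with
  | constEq t _ => rfl
  | opEq b s u h1 h2 _ =>
      obtain ⟨g1, e1⟩ := h1
      obtain ⟨g2, e2⟩ := h2
      rw [e1, e2, sig_op, sig_op]

theorem quot_rootSig {s u : CT F arF n}
    (h : Quot.mk (Iso F arF n Ax) s = Quot.mk (Iso F arF n Ax) u) :
    (rootSym F arF n s).sig = (rootSym F arF n u).sig := by
  have h2 := Quot.eq.mp h
  clear h
  induction h2 with
  | rel _ _ hr => exact iso_rootSig hr
  | refl _ => rfl
  | symm _ _ _ ih => exact ih.symm
  | trans _ _ _ _ _ ih1 ih2 => exact ih1.trans ih2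

theorem absQ_op (b : Bool) (g : F b) (ts) :
    absQ F arF n Ax b (.app (.op b g) ts) =
      .app g (fun i => absQ F arF n Ax b (ts i)) := by
  unfold absQ
  rw [layerize_op_same]
  rfl

theorem varsIn_absQ (b : Bool) (t : CT F arF n) :
    (absQ F arF n Ax b t).VarsIn
      (Quot.mk (Iso F arF n Ax) '' aliensUnder F arF n (sigOf b) t) :=
  Tm.varsIn_mapVar (varsIn_layerize t b)

theorem trivial_pe {b : Bool} (h : AxCong F arF Ax b (V := ℕ) (.var 0) (.var 1))
    {s : CT F arF n} (hs : InSig F arF n (SigP F n Set.univ {0}) s) :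
    PE F arF n Ax Set.univ (SigP F n Set.univ {0}) s (xTm F arF n 0) := by
  have h2 := axcong_pe (n := n) h
    (fun m => match m with | 0 => s | _ => xTm F arF n 0)
    (fun m => by cases m with
      | zero => exact hs
      | succ _ => exact insig_xTm0)
  exact h2

theorem closed_trivial {b : Bool} {p : Tm (F b) (arF b) (Alg F arF n Ax)}
    {q : Alg F arF n Ax} (hv : p.VarsIn ∅) (h : AxCong F arF Ax b p (.var q)) :
    AxCong F arF Ax b (V := ℕ) (.var 0) (.var 1) := by
  have h0 := axcong_bind h (fun _ => (.var 0 : Tm (F b) (arF b) ℕ))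
  have h1 := axcong_bind h (fun _ => (.var 1 : Tm (F b) (arF b) ℕ))
  have he : p.bind (fun _ => (.var 0 : Tm (F b) (arF b) ℕ)) =
      p.bind (fun _ => (.var 1 : Tm (F b) (arF b) ℕ)) :=
    Tm.bind_congr_of_varsIn hv (fun v hv' => absurd hv' (Set.notMem_empty v))
  exact h0.symm.trans (he ▸ h1)

theorem rank_xTm (i : ℕ) : rank F arF n (xTm F arF n i) = 0 := by
  erw [xTm, rank_app]
  have he : (Finset.univ : Finset (Fin (CSym.arity arF (CSym.ind (F := F) (n := n) i)))) = ∅ := rfl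
  rw [he, Finset.sup_empty]
  rfl

theorem allAliens_xTm (i : ℕ) {u : CT F arF n} (h : u ∈ allAliensSet F arF n (xTm F arF n i)) :
    False := by
  erw [xTm, allAliensSet_app] at h
  obtain ⟨j, _⟩ := Set.mem_iUnion.mp h
  exact j.elim0

end AuxLemmas4

section AuxLemmas5
variable {F : Bool → Type} {arF : ∀ b, F b → ℕ} {n : ℕ}
variable {Ax : ∀ b, Set (Tm (F b) (arF b) ℕ × Tm (F b) (arF b) ℕ)}

theorem normalizeCT (hnt : ∀ b : Bool, ¬ AxCong F arF Ax b (V := ℕ) (.var 0) (.var 1)) :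
    ∀ t : CT F arF n, InSig F arF n (SigP F n Set.univ {0}) t →
    ∃ s : CT F arF n, InSig F arF n (SigP F n Set.univ {0}) s ∧
      (∀ k : Fin 4,
        rank F arF n s + (if (rootSym F arF n s).sig = k then 0 else 1) ≤
        rank F arF n t + (if (rootSym F arF n t).sig = k then 0 else 1)) ∧
      PE F arF n Ax Set.univ (SigP F n Set.univ {0}) t s ∧
      interp F arF n Ax s = Quot.mk (Iso F arF n Ax) s ∧
      (∀ u ∈ allAliensSet F arF n s,
        interp F arF n Ax u = Quot.mk (Iso F arF n Ax) u)
  | .var v, _ => v.elim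
  | .app (.gen i) ts, ht => by
      refine ⟨.app (.gen i) ts, ht, fun k => le_refl _, PE.refl _ ht, interp_gen Ax i ts, ?_⟩
      intro u hu
      rw [allAliensSet_app] at hu
      obtain ⟨i0, _⟩ := Set.mem_iUnion.mp hu
      exact i0.elim0
  | .app (.ind j) ts, ht => by
      refine ⟨.app (.ind j) ts, ht, fun k => le_refl _, PE.refl _ ht, interp_ind Ax j ts, ?_⟩
      intro u hu
      rw [allAliensSet_app] at hu
      obtain ⟨i0, _⟩ := Set.mem_iUnion.mp hu
      exact i0.elim0
  | .app (.op b g) ts, ht => by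
      classical
      choose s hs1 hs2 hs3 hs4 hs5 using fun i => normalizeCT hnt (ts i) (ht.2 i)
      have hint : interp F arF n Ax (Tm.app (CSym.op b g) s) =
          (if h : ∃ u, u ∈ aliensSet F arF n
                (Tm.app (CSym.op b g) (fun i => (interp F arF n Ax (s i)).out)) ∧
              AxCong F arF Ax b (absQ F arF n Ax b
                (Tm.app (CSym.op b g) (fun i => (interp F arF n Ax (s i)).out)))
                (.var (Quot.mk _ u))
          then Quot.mk _ h.choose
          else Quot.mk _ (Tm.app (CSym.op b g) (fun i => (interp F arF n Ax (s i)).out))) := by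
        rw [interp]
      set c2 : Fin (CSym.arity arF (CSym.op b g)) → CT F arF n := fun i => (interp F arF n Ax (s i)).out with hc2
      have hmk : ∀ i, Quot.mk (Iso F arF n Ax) (c2 i) = Quot.mk (Iso F arF n Ax) (s i) := by
        intro i
        rw [hc2]
        simp only [hs4]
        exact Quot.out_eq _
      -- rank of the rebuilt term
      have hrank1 : rank F arF n (Tm.app (CSym.op b g) s) ≤
          rank F arF n (Tm.app (CSym.op b g) ts) := by
        rw [rank_app, rank_app]
        exact Finset.sup_mono_fun (fun i _ => hs2 i (CSym.op b g).sig)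
      have hPE1 : PE F arF n Ax Set.univ (SigP F n Set.univ {0})
          (Tm.app (CSym.op b g) ts) (Tm.app (CSym.op b g) s) :=
        PE.congr (.op b g) ts s (Set.mem_univ b) hs3
      have hins1 : InSig F arF n (SigP F n Set.univ {0}) (Tm.app (CSym.op b g) s) :=
        ⟨trivial, hs1⟩
      by_cases hcond : ∃ u, u ∈ aliensSet F arF n (Tm.app (CSym.op b g) c2) ∧
          AxCong F arF Ax b (absQ F arF n Ax b (Tm.app (CSym.op b g) c2))
            (.var (Quot.mk (Iso F arF n Ax) u))
      case neg =>
        -- no collapse: the rebuilt term is its own interpretation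
        refine ⟨Tm.app (CSym.op b g) s, hins1, ?_, hPE1, ?_, ?_⟩
        · intro k
          exact Nat.add_le_add_right hrank1 _
        · rw [hint, dif_neg hcond]
          apply Quot.sound
          refine Iso.opEq b _ _ ⟨g, rfl⟩ ⟨g, rfl⟩ ?_
          rw [layerize_op_same, layerize_op_same]
          exact LEq.congr b g _ _ (fun i => quot_eq_leq (hmk i) b)
        · intro u hu
          rw [allAliensSet_app] at hu
          obtain ⟨i, hi⟩ := Set.mem_iUnion.mp hu
          rcases hi with h1 | h2
          · by_cases hc : (rootSym F arF n (s i)).sig = (CSym.op (F := F) (n := n) b g).sig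
            · rw [if_pos hc] at h1
              exact absurd h1 (Set.notMem_empty u)
            · rw [if_neg hc] at h1
              have : u = s i := h1
              rw [this]
              exact hs4 i
          · exact hs5 i u h2
      case pos =>
        obtain ⟨u'', hu''mem, hu''⟩ := hcond
        -- the abstraction of the rebuilt term is congruent to that of t1
        have habs : AxCong F arF Ax b (absQ F arF n Ax b (Tm.app (CSym.op b g) s))
            (absQ F arF n Ax b (Tm.app (CSym.op b g) c2)) := by
          rw [absQ_op, absQ_op]
          exact .congr g _ _ (fun i => quot_eq_axcong (hmk i).symm b)
        have hq : AxCong F arF Ax b (absQ F arF n Ax b (Tm.app (CSym.op b g) s))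
            (.var (Quot.mk (Iso F arF n Ax) u'')) := habs.trans hu''
        have haset : aliensUnder F arF n (sigOf b) (Tm.app (CSym.op b g) s) =
            aliensSet F arF n (Tm.app (CSym.op b g) s) := by
          rw [aliensUnder_app, if_pos (sig_op b g), aliensSet_app, sig_op b g]
        have hvars : (absQ F arF n Ax b (Tm.app (CSym.op b g) s)).VarsIn
            (Quot.mk (Iso F arF n Ax) '' aliensSet F arF n (Tm.app (CSym.op b g) s)) := by
          rw [← haset]
          exact varsIn_absQ b _
        have hex : ∃ u1, u1 ∈ aliensSet F arF n (Tm.app (CSym.op b g) s) ∧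
            AxCong F arF Ax b (absQ F arF n Ax b (Tm.app (CSym.op b g) s))
              (.var (Quot.mk (Iso F arF n Ax) u1)) := by
          by_contra hex
          push_neg at hex
          rcases Set.eq_empty_or_nonempty (aliensSet F arF n (Tm.app (CSym.op b g) s))
            with hemp | ⟨u0, hu0⟩
          · rw [hemp] at hvars
            rw [Set.image_empty] at hvars
            exact hnt b (closed_trivial hvars hq)
          · have hσ : (absQ F arF n Ax b (Tm.app (CSym.op b g) s)).bind
                (fun p => if p = Quot.mk (Iso F arF n Ax) u'' then
                  Tm.var (Quot.mk (Iso F arF n Ax) u0) else Tm.var p) =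
                absQ F arF n Ax b (Tm.app (CSym.op b g) s) := by
              rw [Tm.bind_congr_of_varsIn hvars ?_, Tm.bind_var]
              rintro v ⟨u, humem, rfl⟩
              rw [if_neg]
              intro he
              exact hex u humem (he ▸ hq)
            have h2 := axcong_bind hq
              (fun p => if p = Quot.mk (Iso F arF n Ax) u'' then
                Tm.var (Quot.mk (Iso F arF n Ax) u0) else Tm.var p)
            rw [hσ] at h2
            simp only [Tm.bind, if_pos rfl] at h2
            exact hex u0 hu0 h2
        obtain ⟨u1, hu1mem, hu1⟩ := hex
        -- basic facts about u1
        obtain ⟨i1, hi1⟩ := Set.mem_iUnion.mp (by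
          rw [aliensSet_app] at hu1mem; exact hu1mem)
        have hu1ins : InSig F arF n (SigP F n Set.univ {0}) u1 :=
          insig_aliensUnder (s i1) _ u1 hi1 (hs1 i1)
        -- PE (app (op b g) s) u1
        have hpe2 : PE F arF n Ax Set.univ (SigP F n Set.univ {0})
            (Tm.app (CSym.op b g) s) u1 := by
          have hreal := axcong_pe hu1 (fun p => indToX F arF n p.out)
            (fun p => insig_indToX _)
          -- rewrite the left side
          have hlhs : (embedOp F arF n b
                ((absQ F arF n Ax b (Tm.app (CSym.op b g) s)))).bind
                (fun p => indToX F arF n p.out) =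
              (embedOp F arF n b (layerize F arF n b (Tm.app (CSym.op b g) s))).bind
                (fun u => indToX F arF n (Quot.mk (Iso F arF n Ax) u).out) := by
            unfold absQ
            rw [embedOp_mapVar, Tm.mapVar_bind]
          rw [hlhs] at hreal
          have hstep : PE F arF n Ax Set.univ (SigP F n Set.univ {0})
              (Tm.app (CSym.op b g) s)
              ((embedOp F arF n b (layerize F arF n b (Tm.app (CSym.op b g) s))).bind
                (fun u => indToX F arF n (Quot.mk (Iso F arF n Ax) u).out)) := by
            have hid : (embedOp F arF n b
                (layerize F arF n b (Tm.app (CSym.op b g) s))).bind (indToX F arF n) =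
                Tm.app (CSym.op b g) s := by
              rw [real_layerize, indToX_eq_self _ hins1]
            have := pe_real_congr (Ax := Ax)
              (layerize F arF n b (Tm.app (CSym.op b g) s)) (indToX F arF n)
              (fun u => indToX F arF n (Quot.mk (Iso F arF n Ax) u).out)
              (fun u => quot_eq_pe (Quot.out_eq _).symm)
            rwa [hid] at this
          have hlast : PE F arF n Ax Set.univ (SigP F n Set.univ {0})
              (indToX F arF n (Quot.mk (Iso F arF n Ax) u1).out) u1 := by
            have := quot_eq_pe (Ax := Ax) (Quot.out_eq (Quot.mk (Iso F arF n Ax) u1))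
            rwa [indToX_eq_self _ hu1ins] at this
          exact (hstep.trans hreal).trans hlast
        -- rank bound
        have hranku : rank F arF n u1 + 1 ≤ rank F arF n (Tm.app (CSym.op b g) s) := by
          have h1 := rank_aliensUnder (s i1) _ u1 hi1
          have h2 : rank F arF n (s i1) +
              (if (rootSym F arF n (s i1)).sig = (CSym.op (F := F) (n := n) b g).sig then 0 else 1) ≤
              rank F arF n (Tm.app (CSym.op b g) s) := by
            rw [rank_app]
            apply Finset.le_sup (Finset.mem_univ i1)
          exact le_trans h1 h2
        -- goodness of u1
        have hgood : interp F arF n Ax u1 = Quot.mk (Iso F arF n Ax) u1 ∧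
            ∀ v ∈ allAliensSet F arF n u1,
              interp F arF n Ax v = Quot.mk (Iso F arF n Ax) v := by
          rcases mem_aliensUnder_cases (s i1) _ u1 hi1 with he | hmem
          · rw [he]
            exact ⟨hs4 i1, hs5 i1⟩
          · exact ⟨hs5 i1 u1 hmem, fun v hv => hs5 i1 v (allAliens_trans (s i1) u1 hmem hv)⟩
        refine ⟨u1, hu1ins, ?_, hPE1.trans hpe2, hgood.1, hgood.2⟩
        intro k
        have hχ : (if (rootSym F arF n u1).sig = k then 0 else 1) ≤ 1 := by
          split <;> omega
        have : rank F arF n u1 + 1 ≤ rank F arF n (Tm.app (CSym.op b g) ts) :=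
          le_trans hranku hrank1
        omega
end AuxLemmas5

section Statement
variable (F : Bool → Type) (arF : ∀ b, F b → ℕ) (n : ℕ)
variable (Ax : ∀ b, Set (Tm (F b) (arF b) ℕ × Tm (F b) (arF b) ℕ))

/-- Canonical minimal-rank representatives: every closed term `t` over
`Σ₁ ∪ Σ₂ ∪ Σ₃ ∪ {x}` is provably equal to a term `t'` of no greater rank whose
interpretation (and that of all its alien subterms) is its own class, and which
is not isomorphic to any term over this signature of strictly smaller rank. -/
theorem canonical_representative (t : CT F arF n)
    (ht : InSig F arF n (SigP F n Set.univ {0}) t) :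
    ∃ t' : CT F arF n, InSig F arF n (SigP F n Set.univ {0}) t' ∧
      rank F arF n t' ≤ rank F arF n t ∧
      PE F arF n Ax Set.univ (SigP F n Set.univ {0}) t t' ∧
      interp F arF n Ax t' = Quot.mk (Iso F arF n Ax) t' ∧
      (∀ u ∈ allAliensSet F arF n t',
        interp F arF n Ax u = Quot.mk (Iso F arF n Ax) u) ∧
      ∀ w : CT F arF n, InSig F arF n (SigP F n Set.univ {0}) w →
        Iso F arF n Ax t' w → rank F arF n t' ≤ rank F arF n w := by
  classical
  by_cases htriv : ∃ b : Bool, AxCong F arF Ax b (V := ℕ) (.var 0) (.var 1)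
  · obtain ⟨b, hb⟩ := htriv
    refine ⟨xTm F arF n 0, insig_xTm0, ?_, trivial_pe hb ht, ?_, ?_, ?_⟩
    · rw [rank_xTm]; exact Nat.zero_le _
    · rw [xTm]; exact interp_ind Ax 0 Fin.elim0
    · intro u hu; exact (allAliens_xTm 0 hu).elim
    · intro w _ _; rw [rank_xTm]; exact Nat.zero_le _
  · push_neg at htriv
    obtain ⟨s0, hs0i, hs0r, hs0pe, hs0g, hs0a⟩ := normalizeCT htriv t ht
    have hW : ∃ m : ℕ, ∃ w : CT F arF n,
        (InSig F arF n (SigP F n Set.univ {0}) w ∧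
          PE F arF n Ax Set.univ (SigP F n Set.univ {0}) t w ∧
          interp F arF n Ax w = Quot.mk (Iso F arF n Ax) w ∧
          ∀ u ∈ allAliensSet F arF n w,
            interp F arF n Ax u = Quot.mk (Iso F arF n Ax) u) ∧
        rank F arF n w = m :=
      ⟨rank F arF n s0, s0, ⟨hs0i, hs0pe, hs0g, hs0a⟩, rfl⟩
    obtain ⟨w0, hw0, hw0r⟩ := Nat.find_spec hW
    have hs0rank : rank F arF n s0 ≤ rank F arF n t := by
      have h2 := hs0r (rootSym F arF n t).sig
      rw [if_pos rfl] at h2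
      calc rank F arF n s0 ≤ _ := Nat.le_add_right _ _
        _ ≤ rank F arF n t + 0 := h2
        _ = rank F arF n t := Nat.add_zero _
    refine ⟨w0, hw0.1, ?_, hw0.2.1, hw0.2.2.1, hw0.2.2.2, ?_⟩
    · have h1 : Nat.find hW ≤ rank F arF n s0 :=
        Nat.find_min' hW ⟨s0, ⟨hs0i, hs0pe, hs0g, hs0a⟩, rfl⟩
      omega
    · intro w hwins hiso
      have hpw : PE F arF n Ax Set.univ (SigP F n Set.univ {0}) w0 w := by
        have := iso_pe hiso
        rwa [indToX_eq_self w0 hw0.1, indToX_eq_self w hwins] at this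
      obtain ⟨s1, h1i, h1r, h1pe, h1g, h1a⟩ := normalizeCT htriv w hwins
      have hm1 : Nat.find hW ≤ rank F arF n s1 :=
        Nat.find_min' hW ⟨s1, ⟨h1i, (hw0.2.1.trans hpw).trans h1pe, h1g, h1a⟩, rfl⟩
      have hs1rank : rank F arF n s1 ≤ rank F arF n w := by
        have h2 := h1r (rootSym F arF n w).sig
        rw [if_pos rfl] at h2
        calc rank F arF n s1 ≤ _ := Nat.le_add_right _ _
          _ ≤ rank F arF n w + 0 := h2
          _ = rank F arF n w := Nat.add_zero _
      omega

end Statement
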